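/- Let t ≥ 1 and let G be a finite simple graph whose adjacency matrix has spectrum {(4t+1)^1, (2t−1)^{2t}, (−1)^{(t+1)^2}, (−3)^{t^2}}. Then any two distinct nonadjacent vertices x and y of G have at most 2t+2 common neighbors, i.e., μ_{x,y} ≤ 2t+2. -/

import Mathlib

open Polynomial Matrix SimpleGraph

/-- The `n × n`-grid: the Cartesian (box) product of two complete graphs on `Fin n`.
Vertices are pairs `(i, j)`, two distinct vertices being adjacent iff they agree in
exactly one coordinate. -/
def gridGraph (n : ℕ) : SimpleGraph (Fin n × Fin n) :=
  (⊤ : SimpleGraph (Fin n)) □ (⊤ : SimpleGraph (Fin n))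

/-- The `q`-clique extension of a graph `G`: the graph on `V × Fin q` in which `(x, i)`
and `(y, j)` are adjacent iff `x` and `y` are adjacent in `G`, or `x = y` and `i ≠ j`. -/
def cliqueExt {V : Type*} (q : ℕ) (G : SimpleGraph V) : SimpleGraph (V × Fin q) where
  Adj a b := G.Adj a.1 b.1 ∨ (a.1 = b.1 ∧ a.2 ≠ b.2)
  symm := by
    constructor
    rintro ⟨x, i⟩ ⟨y, j⟩ (h | ⟨h, hij⟩)
    · exact Or.inl h.symm
    · exact Or.inr ⟨h.symm, hij.symm⟩
  loopless := by
    constructor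
    rintro ⟨x, i⟩ (h | ⟨-, hij⟩)
    · exact G.loopless.irrefl x h
    · exact hij rfl

instance cliqueExtAdjDec {V : Type*} (q : ℕ) (G : SimpleGraph V) [DecidableRel G.Adj]
    [DecidableEq V] : DecidableRel (cliqueExt q G).Adj :=
  fun a b => inferInstanceAs (Decidable (G.Adj a.1 b.1 ∨ (a.1 = b.1 ∧ a.2 ≠ b.2)))

instance boxProdAdjDec {α β : Type*} (G : SimpleGraph α) (H : SimpleGraph β)
    [DecidableRel G.Adj] [DecidableRel H.Adj] [DecidableEq α] [DecidableEq β] :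
    DecidableRel (G □ H).Adj :=
  fun x y => inferInstanceAs (Decidable (G.Adj x.1 y.1 ∧ x.2 = y.2 ∨ H.Adj x.2 y.2 ∧ x.1 = y.1))

instance gridAdjDec (n : ℕ) : DecidableRel (gridGraph n).Adj := by
  unfold gridGraph; infer_instance

section Conj
variable {n : Type*} [Fintype n] [DecidableEq n]

/-- Conjugation by an invertible (unitary) matrix as an `AlgHom`. -/
noncomputable def conjAlgHom (U : Matrix n n ℝ) (h1 : U * star U = 1) (h2 : star U * U = 1) :
    Matrix n n ℝ →ₐ[ℝ] Matrix n n ℝ where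
  toFun M := U * M * star U
  map_one' := by rw [mul_one, h1]
  map_mul' M N := by
    calc U * (M * N) * star U = (U * M) * (star U * U) * (N * star U) := by
          rw [h2, mul_one]; noncomm_ring
      _ = U * M * star U * (U * N * star U) := by noncomm_ring
  map_zero' := by simp
  map_add' M N := by noncomm_ring
  commutes' r := by
    simp only [Algebra.algebraMap_eq_smul_one]
    rw [mul_smul_comm, mul_one, smul_mul_assoc, h1]

theorem conjAlgHom_apply (U : Matrix n n ℝ) (h1 h2) (M : Matrix n n ℝ) :
    conjAlgHom U h1 h2 M = U * M * star U := rfl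

end Conj

section Spectral
variable {n : Type*} [Fintype n] [DecidableEq n] {A : Matrix n n ℝ} (hA : A.IsHermitian)

theorem unitary_h1 : (hA.eigenvectorUnitary : Matrix n n ℝ) * star (hA.eigenvectorUnitary : Matrix n n ℝ) = 1 :=
  Matrix.mem_unitaryGroup_iff.mp hA.eigenvectorUnitary.2

theorem unitary_h2 : star (hA.eigenvectorUnitary : Matrix n n ℝ) * (hA.eigenvectorUnitary : Matrix n n ℝ) = 1 :=
  Matrix.mem_unitaryGroup_iff'.mp hA.eigenvectorUnitary.2

theorem spectral_real :
    A = (hA.eigenvectorUnitary : Matrix n n ℝ) * diagonal hA.eigenvalues *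
      star (hA.eigenvectorUnitary : Matrix n n ℝ) := by
  have := hA.spectral_theorem
  simpa using this

theorem aeval_conj (p : ℝ[X]) :
    Polynomial.aeval A p = (hA.eigenvectorUnitary : Matrix n n ℝ) *
      diagonal (fun i => p.eval (hA.eigenvalues i)) *
      star (hA.eigenvectorUnitary : Matrix n n ℝ) := by
  set U := (hA.eigenvectorUnitary : Matrix n n ℝ) with hU
  let φ := conjAlgHom U (unitary_h1 hA) (unitary_h2 hA)
  have hdiag : diagonal hA.eigenvalues = (diagonalAlgHom ℝ) hA.eigenvalues := rfl
  have hspec : A = φ ((diagonalAlgHom ℝ) hA.eigenvalues) := by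
    rw [← hdiag, conjAlgHom_apply]; exact spectral_real hA
  have key : Polynomial.aeval (φ ((diagonalAlgHom ℝ) hA.eigenvalues)) p =
      φ ((diagonalAlgHom ℝ) (Polynomial.aeval hA.eigenvalues p)) := by
    rw [Polynomial.aeval_algHom_apply, Polynomial.aeval_algHom_apply]
  rw [← hspec] at key
  rw [key, conjAlgHom_apply]
  have hfun : (Polynomial.aeval hA.eigenvalues p : n → ℝ) = fun i => p.eval (hA.eigenvalues i) := by
    funext i
    rw [Polynomial.aeval_fn_apply]
    exact congrFun (Polynomial.coe_aeval_eq_eval _) p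
  congr 2
  show diagonal (Polynomial.aeval hA.eigenvalues p) = _
  rw [hfun]

theorem aeval_posSemidef (p : ℝ[X]) (h : ∀ i, 0 ≤ p.eval (hA.eigenvalues i)) :
    (Polynomial.aeval A p).PosSemidef := by
  rw [aeval_conj hA p]
  have hd : (Matrix.diagonal fun i => p.eval (hA.eigenvalues i)).PosSemidef :=
    Matrix.posSemidef_diagonal_iff.mpr h
  have := hd.mul_mul_conjTranspose_same (hA.eigenvectorUnitary : Matrix n n ℝ)
  simpa [Matrix.star_eq_conjTranspose] using this

theorem charpoly_eq_prod_eigs :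
    A.charpoly = ∏ i, (X - C (hA.eigenvalues i)) := by
  classical
  set U := (hA.eigenvectorUnitary : Matrix n n ℝ) with hUdef
  set U' := U.map (C : ℝ →+* ℝ[X]) with hU'
  set W' := (star U).map (C : ℝ →+* ℝ[X]) with hW'
  have hUW : U' * W' = 1 := by
    rw [hU', hW', ← Matrix.map_mul, unitary_h1 hA, Matrix.map_one _ (map_zero C) (map_one C)]
  have hcm : charmatrix A = U' * diagonal (fun i => (X : ℝ[X]) - C (hA.eigenvalues i)) * W' := by
    have h1 : charmatrix A = (X : ℝ[X]) • (1 : Matrix n n ℝ[X]) - A.map (C : ℝ →+* ℝ[X]) := by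
      rw [charmatrix]
      congr 1
      rw [Matrix.smul_one_eq_diagonal]
      rfl
    have h2 : A.map (C : ℝ →+* ℝ[X]) = U' * diagonal (fun i => (C (hA.eigenvalues i) : ℝ[X])) * W' := by
      conv_lhs => rw [spectral_real hA]
      rw [Matrix.map_mul, Matrix.map_mul]
      rw [Matrix.diagonal_map (map_zero C)]
    have h3 : (X : ℝ[X]) • (1 : Matrix n n ℝ[X]) = U' * ((X : ℝ[X]) • (1 : Matrix n n ℝ[X])) * W' := by
      rw [mul_smul_comm, mul_one, smul_mul_assoc, hUW]
    rw [h1, h2, h3, ← Matrix.sub_mul, ← Matrix.mul_sub]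
    congr 2
    rw [Matrix.smul_one_eq_diagonal, Matrix.diagonal_sub]
  have hdet : det (U' * diagonal (fun i => (X : ℝ[X]) - C (hA.eigenvalues i)) * W')
      = ∏ i, ((X : ℝ[X]) - C (hA.eigenvalues i)) := by
    rw [det_mul, det_mul, mul_comm, ← mul_assoc, mul_comm (W'.det), ← det_mul, hUW, det_one,
      one_mul, det_diagonal]
  rw [Matrix.charpoly, hcm, hdet]

theorem eigs_multiset_eq_roots :
    Finset.univ.val.map hA.eigenvalues = A.charpoly.roots := by
  rw [charpoly_eq_prod_eigs hA, Finset.prod_eq_multiset_prod]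
  have : Finset.univ.val.map (fun i => (X : ℝ[X]) - C (hA.eigenvalues i))
      = (Finset.univ.val.map hA.eigenvalues).map (fun a => (X : ℝ[X]) - C a) := by
    rw [Multiset.map_map]; rfl
  rw [this, Polynomial.roots_multiset_prod_X_sub_C]

theorem trace_sq_eq_sum_sq :
    Matrix.trace (A * A) = ∑ i, hA.eigenvalues i ^ 2 := by
  have h2 : A * A = Polynomial.aeval A (X * X : ℝ[X]) := by
    simp [_root_.map_mul]
  rw [h2, aeval_conj hA, Matrix.trace_mul_cycle, unitary_h2 hA, one_mul,
    Matrix.trace_diagonal]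
  simp [pow_two]

end Spectral

/-- Let `t ≥ 1` and let `G` be a finite simple graph whose adjacency matrix has spectrum
`{(4t+1)^1, (2t−1)^{2t}, (−1)^{(t+1)^2}, (−3)^{t^2}}`. Then any two distinct nonadjacent
vertices `x` and `y` of `G` have at most `2t+2` common neighbors. -/
theorem stmt_8 (t : ℕ) (ht : 1 ≤ t) {V : Type*} [Fintype V] [DecidableEq V]
    (G : SimpleGraph V) [DecidableRel G.Adj]
    (hchar : (G.adjMatrix ℝ).charpoly =
      (X - C (4 * (t : ℝ) + 1)) * (X - C (2 * (t : ℝ) - 1)) ^ (2 * t) *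
        (X + 1) ^ ((t + 1) ^ 2) * (X + 3) ^ (t ^ 2)) :
    ∀ x y : V, x ≠ y → ¬G.Adj x y →
      (G.neighborFinset x ∩ G.neighborFinset y).card ≤ 2 * t + 2 := by
  intro x y hxy hnadj
  have ht0 : (0:ℝ) ≤ (t:ℝ) := Nat.cast_nonneg t
  have hA : (G.adjMatrix ℝ).IsHermitian := by
    show (G.adjMatrix ℝ)ᴴ = G.adjMatrix ℝ
    ext i j
    simp [Matrix.conjTranspose_apply, SimpleGraph.adjMatrix_apply, SimpleGraph.adj_comm]
  set A := G.adjMatrix ℝ with hAdef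
  -- rewrite the factors of the characteristic polynomial in `X - C r` form
  have e1 : ((X : ℝ[X]) + 1) = X - C (-1 : ℝ) := by
    rw [map_neg, Polynomial.C_1, sub_neg_eq_add]
  have e3 : ((X : ℝ[X]) + 3) = X - C (-3 : ℝ) := by
    rw [map_neg, sub_neg_eq_add]
    simp [map_ofNat]
  -- the multiset of eigenvalues
  have hroots : Finset.univ.val.map hA.eigenvalues =
      {(4*(t:ℝ)+1)} + Multiset.replicate (2*t) (2*(t:ℝ)-1) +
        Multiset.replicate ((t+1)^2) (-1:ℝ) + Multiset.replicate (t^2) (-3:ℝ) := by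
    rw [eigs_multiset_eq_roots hA, hchar, e1, e3]
    have m1 : ((X : ℝ[X]) - C (4*(t:ℝ)+1)).Monic := Polynomial.monic_X_sub_C _
    have m2 : (((X : ℝ[X]) - C (2*(t:ℝ)-1)) ^ (2*t)).Monic := (Polynomial.monic_X_sub_C _).pow _
    have m3 : (((X : ℝ[X]) - C (-1:ℝ)) ^ ((t+1)^2)).Monic := (Polynomial.monic_X_sub_C _).pow _
    have m4 : (((X : ℝ[X]) - C (-3:ℝ)) ^ (t^2)).Monic := (Polynomial.monic_X_sub_C _).pow _
    rw [Polynomial.roots_mul (((m1.mul m2).mul m3).mul m4).ne_zero,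
      Polynomial.roots_mul ((m1.mul m2).mul m3).ne_zero,
      Polynomial.roots_mul (m1.mul m2).ne_zero,
      Polynomial.roots_pow, Polynomial.roots_pow, Polynomial.roots_pow,
      Polynomial.roots_X_sub_C, Polynomial.roots_X_sub_C, Polynomial.roots_X_sub_C,
      Polynomial.roots_X_sub_C, Multiset.nsmul_singleton, Multiset.nsmul_singleton,
      Multiset.nsmul_singleton]
  have hmem : ∀ i, hA.eigenvalues i = 4*(t:ℝ)+1 ∨ hA.eigenvalues i = 2*(t:ℝ)-1 ∨
      hA.eigenvalues i = -1 ∨ hA.eigenvalues i = -3 := by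
    intro i
    have hi : hA.eigenvalues i ∈ Finset.univ.val.map hA.eigenvalues :=
      Multiset.mem_map_of_mem _ (Finset.mem_univ i)
    rw [hroots] at hi
    simp only [Multiset.mem_add, Multiset.mem_singleton, Multiset.mem_replicate] at hi
    tauto
  -- sum of squares of eigenvalues
  have hsumsq : ∑ i, hA.eigenvalues i ^ 2 =
      (4*(t:ℝ)+1)^2 + (2*t) * (2*(t:ℝ)-1)^2 + ((t:ℝ)+1)^2 * 1 + (t:ℝ)^2 * 9 := by
    have h1 : ∑ i, hA.eigenvalues i ^ 2
        = ((Finset.univ.val.map hA.eigenvalues).map (fun a : ℝ => a ^ 2)).sum := by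
      rw [Finset.sum_eq_multiset_sum, Multiset.map_map]
      rfl
    rw [h1, hroots]
    simp only [Multiset.map_add, Multiset.map_singleton, Multiset.map_replicate,
      Multiset.sum_add, Multiset.sum_singleton, Multiset.sum_replicate, nsmul_eq_mul]
    push_cast
    ring
  -- cardinality of the vertex set
  have hcardn : Fintype.card V = 1 + 2*t + (t+1)^2 + t^2 := by
    have h1 : Fintype.card V = Multiset.card (Finset.univ.val.map hA.eigenvalues) := by
      rw [Multiset.card_map]
      rfl
    rw [h1, hroots]
    simp [Multiset.card_replicate]
    omega
  -- sum of degrees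
  have hdiagsum : Matrix.trace (A * A) = ∑ v, (G.degree v : ℝ) := by
    simp only [Matrix.trace, Matrix.diag, hAdef]
    refine Finset.sum_congr rfl fun v _ => ?_
    exact G.adjMatrix_mul_self_apply_self v
  have hdegsum : ∑ v, (G.degree v : ℝ) = (Fintype.card V : ℝ) * (4*(t:ℝ)+1) := by
    rw [← hdiagsum, trace_sq_eq_sum_sq hA, hsumsq, hcardn]
    push_cast
    ring
  -- regularity
  have hBpsd : ((4*(t:ℝ)+1) • (1 : Matrix V V ℝ) - A).PosSemidef := by
    have hBaeval : Polynomial.aeval A (C (4*(t:ℝ)+1) - X)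
        = (4*(t:ℝ)+1) • (1 : Matrix V V ℝ) - A := by
      rw [map_sub, Polynomial.aeval_C, Polynomial.aeval_X, Algebra.algebraMap_eq_smul_one]
    rw [← hBaeval]
    refine aeval_posSemidef hA _ (fun i => ?_)
    rw [Polynomial.eval_sub, Polynomial.eval_C, Polynomial.eval_X]
    rcases hmem i with h | h | h | h <;> rw [h] <;> nlinarith
  have hq : star (Function.const V (1:ℝ)) ⬝ᵥ
      (((4*(t:ℝ)+1) • (1 : Matrix V V ℝ) - A) *ᵥ Function.const V (1:ℝ)) = 0 := by
    have hstar : star (Function.const V (1:ℝ)) = Function.const V (1:ℝ) := by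
      funext v; simp
    rw [hstar, Matrix.sub_mulVec]
    have hones : ((4*(t:ℝ)+1) • (1 : Matrix V V ℝ)) *ᵥ Function.const V (1:ℝ)
        = Function.const V (4*(t:ℝ)+1) := by
      funext v
      simp [Matrix.smul_mulVec, Matrix.one_mulVec]
    rw [hones]
    have hAv : A *ᵥ Function.const V (1:ℝ) = fun v => (G.degree v : ℝ) := by
      funext v
      rw [hAdef, SimpleGraph.adjMatrix_mulVec_const_apply, mul_one]
    rw [hAv]
    simp only [dotProduct, Function.const_apply, Pi.sub_apply, one_mul]
    rw [Finset.sum_sub_distrib, hdegsum, Finset.sum_const, Finset.card_univ, nsmul_eq_mul]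
    ring
  have hB1 : ((4*(t:ℝ)+1) • (1 : Matrix V V ℝ) - A) *ᵥ Function.const V (1:ℝ) = 0 :=
    (hBpsd.dotProduct_mulVec_zero_iff _).mp hq
  have hreg : ∀ v, (G.degree v : ℝ) = 4*(t:ℝ)+1 := by
    intro v
    have hv := congrFun hB1 v
    rw [Matrix.sub_mulVec] at hv
    have hones : (((4*(t:ℝ)+1) • (1 : Matrix V V ℝ)) *ᵥ Function.const V (1:ℝ)) v
        = 4*(t:ℝ)+1 := by
      simp [Matrix.smul_mulVec, Matrix.one_mulVec]
    have hAv : (A *ᵥ Function.const V (1:ℝ)) v = (G.degree v : ℝ) := by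
      rw [hAdef, SimpleGraph.adjMatrix_mulVec_const_apply, mul_one]
    simp only [Pi.sub_apply, Pi.zero_apply] at hv
    rw [hones, hAv] at hv
    linarith
  -- the PSD matrix K
  set K := (A - (2*(t:ℝ)-1) • (1 : Matrix V V ℝ)) * (A + 1) with hKdef
  have hKpsd : K.PosSemidef := by
    have hKaeval : Polynomial.aeval A ((X - C (2*(t:ℝ)-1)) * (X + 1)) = K := by
      rw [_root_.map_mul, map_sub, map_add, Polynomial.aeval_C, Polynomial.aeval_X,
        Polynomial.aeval_one, Algebra.algebraMap_eq_smul_one, hKdef]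
    rw [← hKaeval]
    refine aeval_posSemidef hA _ (fun i => ?_)
    rw [Polynomial.eval_mul, Polynomial.eval_sub, Polynomial.eval_add, Polynomial.eval_C,
      Polynomial.eval_X, Polynomial.eval_one]
    rcases hmem i with h | h | h | h <;> rw [h] <;> nlinarith
  have hKexp : K = A * A + A - (2*(t:ℝ)-1) • A - (2*(t:ℝ)-1) • (1 : Matrix V V ℝ) := by
    rw [hKdef, sub_mul, mul_add, mul_add, mul_one, mul_one, Matrix.smul_mul, one_mul,
      sub_add_eq_sub_sub]
  -- entries of K
  have hmuApply : ∀ a b : V, a ≠ b → ¬ G.Adj a b →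
      K a b = ((G.neighborFinset a ∩ G.neighborFinset b).card : ℝ) := by
    intro a b hab hnab
    have hAab : A a b = 0 := by simp [hAdef, SimpleGraph.adjMatrix_apply, hnab]
    have hsq : (A * A) a b = ((G.neighborFinset a ∩ G.neighborFinset b).card : ℝ) := by
      rw [hAdef, SimpleGraph.adjMatrix_mul_apply]
      have : ∀ u ∈ G.neighborFinset a, G.adjMatrix ℝ u b = if G.Adj u b then 1 else 0 := by
        intro u _; simp [SimpleGraph.adjMatrix_apply]
      rw [Finset.sum_congr rfl this, Finset.sum_boole]
      congr 1
      congr 1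
      ext u
      simp [SimpleGraph.mem_neighborFinset, SimpleGraph.adj_comm]
    rw [hKexp]
    simp only [Matrix.sub_apply, Matrix.add_apply, Matrix.smul_apply, smul_eq_mul,
      Matrix.one_apply_ne hab]
    rw [hsq, hAab]
    ring
  have hKxx : ∀ a : V, K a a = 2*(t:ℝ)+2 := by
    intro a
    have hAaa : A a a = 0 := by simp [hAdef]
    have hsq : (A * A) a a = (G.degree a : ℝ) := by
      rw [hAdef]; exact G.adjMatrix_mul_self_apply_self a
    rw [hKexp]
    simp only [Matrix.sub_apply, Matrix.add_apply, Matrix.smul_apply, smul_eq_mul,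
      Matrix.one_apply_eq]
    rw [hsq, hAaa, hreg a]
    ring
  -- final quadratic form argument
  set v : V → ℝ := Pi.single x 1 - Pi.single y 1 with hv
  have h0 : 0 ≤ star v ⬝ᵥ K *ᵥ v := hKpsd.dotProduct_mulVec_nonneg v
  have hstarv : star v = v := by funext z; simp [hv]
  rw [hstarv] at h0
  have hKv : K *ᵥ v = fun i => K i x - K i y := by
    funext i
    rw [hv, Matrix.mulVec_sub]
    simp [Matrix.mulVec_single]
  rw [hKv] at h0
  have hdp : v ⬝ᵥ (fun i => K i x - K i y)
      = (K x x - K x y) - (K y x - K y y) := by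
    rw [hv, sub_dotProduct, single_dotProduct, single_dotProduct]
    simp
  rw [hdp] at h0
  rw [hKxx x, hKxx y, hmuApply x y hxy hnadj,
    hmuApply y x hxy.symm (fun h => hnadj h.symm)] at h0
  have hcomm : G.neighborFinset y ∩ G.neighborFinset x
      = G.neighborFinset x ∩ G.neighborFinset y := Finset.inter_comm _ _
  rw [hcomm] at h0
  have hfin : ((G.neighborFinset x ∩ G.neighborFinset y).card : ℝ) ≤ ((2*t+2 : ℕ) : ℝ) := by
    push_cast
    linarith
  exact_mod_cast hfin
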